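/- Let L be a 3-dimensional unsolvable Lie algebra over ℤ_p (free as a ℤ_p-module). Then the matrix of L with respect to any basis is symmetric. -/

import Mathlib

open Matrix

/-- Cross product of images under a matrix equals the transposed adjugate applied to
the cross product. -/
lemma cross_mulVec_aux {R : Type*} [CommRing R] (A : Matrix (Fin 3) (Fin 3) R)
    (v w : Fin 3 → R) :
    (A *ᵥ v) ⨯₃ (A *ᵥ w) = (Matrix.adjugate A)ᵀ *ᵥ (v ⨯₃ w) := by
  funext i
  fin_cases i <;>
    simp [crossProduct, mulVec, dotProduct, Matrix.adjugate_fin_three, Fin.sum_univ_three] <;>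
    ring

/-- The submodule generated by all brackets `f a b` with `a ∈ S`, `b ∈ T`. -/
noncomputable def bracketSub {p : ℕ} [Fact p.Prime] {L : Type*} [AddCommGroup L] [Module ℤ_[p] L]
    (f : L →ₗ[ℤ_[p]] L →ₗ[ℤ_[p]] L) (S T : Submodule ℤ_[p] L) : Submodule ℤ_[p] L :=
  Submodule.span ℤ_[p] {z | ∃ a ∈ S, ∃ b ∈ T, z = f a b}

/-- The derived series `δ_0(L) = L`, `δ_{i+1}(L) = [δ_i(L), δ_i(L)]`. -/
noncomputable def derivedSer {p : ℕ} [Fact p.Prime] {L : Type*} [AddCommGroup L] [Module ℤ_[p] L]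
    (f : L →ₗ[ℤ_[p]] L →ₗ[ℤ_[p]] L) : ℕ → Submodule ℤ_[p] L
  | 0 => ⊤
  | n + 1 => bracketSub f (derivedSer f n) (derivedSer f n)

theorem stmt7 (p : ℕ) [Fact p.Prime] {L : Type*} [AddCommGroup L] [Module ℤ_[p] L]
    (f : L →ₗ[ℤ_[p]] L →ₗ[ℤ_[p]] L) (hanti : ∀ z : L, f z z = 0)
    (hjacobi : ∀ x y z : L, f (f x y) z + f (f z x) y + f (f y z) x = 0)
    (hunsolv : ∀ i, derivedSer f i ≠ ⊥) :
    ∀ (b : Module.Basis (Fin 3) ℤ_[p] L) (A : Matrix (Fin 3) (Fin 3) ℤ_[p]),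
      (f (b 1) (b 2) = ∑ i : Fin 3, A i 0 • b i ∧
       f (b 2) (b 0) = ∑ i : Fin 3, A i 1 • b i ∧
       f (b 0) (b 1) = ∑ i : Fin 3, A i 2 • b i) →
      A.transpose = A := by
  intro b A hABC
  obtain ⟨h12, h20, h01⟩ := hABC
  have hsk : ∀ x y : L, f y x = - f x y := by
    intro x y
    have h := hanti (x + y)
    simp only [map_add, LinearMap.add_apply, hanti x, hanti y, zero_add, add_zero] at h
    linear_combination (norm := abel) h
  set e := b.equivFun with he
  -- the coordinate formula for the bracket
  have key : ∀ x y : L, e (f x y) = A *ᵥ ((e x) ⨯₃ (e y)) := by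
    let h : L →ₗ[ℤ_[p]] L →ₗ[ℤ_[p]] L :=
      ((crossProduct (R := ℤ_[p])).compr₂
        (e.symm.toLinearMap ∘ₗ A.mulVecLin)).compl₁₂ e.toLinearMap e.toLinearMap
    have hfh : f = h := by
      have hh : ∀ i j : Fin 3, h (b i) (b j) = e.symm (A *ᵥ (e (b i) ⨯₃ e (b j))) := by
        intro i j; simp [h, LinearMap.compl₁₂_apply, LinearMap.compr₂_apply]
      apply b.ext; intro i; apply b.ext; intro j
      fin_cases i <;> fin_cases j <;>
        simp only [hh, Fin.isValue, hanti, cross_self, map_zero, mulVec_zero,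
          show ((⟨0, by omega⟩ : Fin 3) = 0) from rfl,
          show ((⟨1, by omega⟩ : Fin 3) = 1) from rfl,
          show ((⟨2, by omega⟩ : Fin 3) = 2) from rfl]
      · rw [h01]
        simp [cross_apply, Module.Basis.equivFun_self, mulVec, dotProduct, Fin.sum_univ_three,
          Module.Basis.equivFun_symm_apply, he]
      · rw [hsk, h20]
        simp [cross_apply, Module.Basis.equivFun_self, mulVec, dotProduct, Fin.sum_univ_three,
          Module.Basis.equivFun_symm_apply, he, neg_smul]
      · rw [hsk, h01]
        simp [cross_apply, Module.Basis.equivFun_self, mulVec, dotProduct, Fin.sum_univ_three,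
          Module.Basis.equivFun_symm_apply, he, neg_smul]
      · rw [h12]
        simp [cross_apply, Module.Basis.equivFun_self, mulVec, dotProduct, Fin.sum_univ_three,
          Module.Basis.equivFun_symm_apply, he]
      · rw [h20]
        simp [cross_apply, Module.Basis.equivFun_self, mulVec, dotProduct, Fin.sum_univ_three,
          Module.Basis.equivFun_symm_apply, he]
      · rw [hsk, h12]
        simp [cross_apply, Module.Basis.equivFun_self, mulVec, dotProduct, Fin.sum_univ_three,
          Module.Basis.equivFun_symm_apply, he, neg_smul]
    intro x y
    rw [hfh]
    simp [h, LinearMap.compl₁₂_apply, LinearMap.compr₂_apply]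
  -- Jacobi identity gives A *ᵥ w = 0 for the antisymmetry defect w
  set w : Fin 3 → ℤ_[p] := ![A 1 2 - A 2 1, A 2 0 - A 0 2, A 0 1 - A 1 0] with hw
  have hAw : A *ᵥ w = 0 := by
    have hj : e (f (f (b 0) (b 1)) (b 2) + f (f (b 2) (b 0)) (b 1) + f (f (b 1) (b 2)) (b 0))
        = 0 := by rw [hjacobi]; exact map_zero _
    rw [map_add, map_add, key, key, key, key, key, key] at hj
    rw [← hj]
    funext i
    fin_cases i <;>
      simp [hw, cross_apply, Module.Basis.equivFun_self, mulVec, dotProduct, Fin.sum_univ_three, he] <;>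
      ring
  by_contra hA
  -- A is singular
  have hdet : A.det = 0 := by
    have hdw : ∀ k, A.det * w k = 0 := by
      intro k
      have : A.det • w = Matrix.adjugate A *ᵥ (A *ᵥ w) := by
        rw [Matrix.mulVec_mulVec, Matrix.adjugate_mul, Matrix.smul_mulVec,
          Matrix.one_mulVec]
      rw [hAw, Matrix.mulVec_zero] at this
      have := congrFun this k
      simpa using this
    have hex : ∃ i j, A j i ≠ A i j := by
      by_contra hno
      push_neg at hno
      exact hA (Matrix.ext fun i j => by rw [Matrix.transpose_apply]; exact hno i j)
    obtain ⟨i, j, hij⟩ := hex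
    have solve : ∀ (k : Fin 3), w k ≠ 0 → A.det = 0 := by
      intro k hk
      rcases mul_eq_zero.mp (hdw k) with h | h
      · exact h
      · exact absurd h hk
    fin_cases i <;> fin_cases j <;>
      simp only [Fin.isValue, show ((⟨0, by omega⟩ : Fin 3) = 0) from rfl,
        show ((⟨1, by omega⟩ : Fin 3) = 1) from rfl,
        show ((⟨2, by omega⟩ : Fin 3) = 2) from rfl] at hij
    all_goals first
      | exact absurd rfl hij
      | exact solve 0 (by simpa [hw, sub_ne_zero] using hij)
      | exact solve 0 (by simpa [hw, sub_ne_zero] using hij.symm)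
      | exact solve 1 (by simpa [hw, sub_ne_zero] using hij)
      | exact solve 1 (by simpa [hw, sub_ne_zero] using hij.symm)
      | exact solve 2 (by simpa [hw, sub_ne_zero] using hij)
      | exact solve 2 (by simpa [hw, sub_ne_zero] using hij.symm)
  -- now show the derived series terminates, contradicting unsolvability
  set B : Matrix (Fin 3) (Fin 3) ℤ_[p] := A * (Matrix.adjugate A)ᵀ with hB
  have hadjB : (Matrix.adjugate B)ᵀ = 0 := by
    have h1 : Matrix.adjugate ((Matrix.adjugate A)ᵀ) = 0 := by
      rw [Matrix.adjugate_transpose, Matrix.adjugate_adjugate _ (by simp), Matrix.det_transpose,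
        hdet]
      simp
    rw [hB, Matrix.adjugate_mul_distrib, h1]
    simp
  have hD1 : ∀ x ∈ derivedSer f 1, ∃ v, e x = A *ᵥ v := by
    intro x hx
    have hle : derivedSer f 1 ≤ Submodule.comap (e.toLinearMap)
        (LinearMap.range A.mulVecLin) := by
      apply Submodule.span_le.mpr
      rintro z ⟨a, -, c, -, rfl⟩
      exact ⟨(e a) ⨯₃ (e c), (key a c).symm⟩
    obtain ⟨v, hv⟩ := hle hx
    exact ⟨v, hv.symm⟩
  have hD2 : ∀ x ∈ derivedSer f 2, ∃ v, e x = B *ᵥ v := by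
    intro x hx
    have hle : derivedSer f 2 ≤ Submodule.comap (e.toLinearMap)
        (LinearMap.range B.mulVecLin) := by
      apply Submodule.span_le.mpr
      rintro z ⟨a, ha, c, hc, rfl⟩
      obtain ⟨v, hv⟩ := hD1 a ha
      obtain ⟨u, hu⟩ := hD1 c hc
      refine ⟨v ⨯₃ u, ?_⟩
      have : e (f a c) = B *ᵥ (v ⨯₃ u) := by
        rw [key, hv, hu, cross_mulVec_aux, Matrix.mulVec_mulVec, hB]
      exact this.symm
    obtain ⟨v, hv⟩ := hle hx
    exact ⟨v, hv.symm⟩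
  have hD3 : derivedSer f 3 = ⊥ := by
    apply le_bot_iff.mp
    apply Submodule.span_le.mpr
    rintro z ⟨a, ha, c, hc, rfl⟩
    obtain ⟨v, hv⟩ := hD2 a ha
    obtain ⟨u, hu⟩ := hD2 c hc
    have hz : e (f a c) = 0 := by
      rw [key, hv, hu, cross_mulVec_aux, hadjB]
      simp
    have : f a c = 0 := by
      have := congrArg e.symm hz
      simpa using this
    simp [this]
  exact hunsolv 3 hD3
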